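/- For any integral lattice L ⊂ ℝ^n and any positive integer k, the set of lattice vectors y ∈ L with ‖y‖² ≤ k is finite and has cardinality at most 2 · binomial(n + 2k − 1, 2k − 1) − 1. -/

import Mathlib

open MvPolynomial

noncomputable section

/-- Injection from bounded-degree exponent vectors into `Sym (Fin (n+1)) d`. -/
def padSym (n d : ℕ) (s : {s : Fin n →₀ ℕ // (s.sum fun _ e => e) ≤ d}) :
    Sym (Fin (n + 1)) d :=
  ⟨(Finsupp.toMultiset s.1).map Fin.castSucc +
      Multiset.replicate (d - s.1.sum fun _ e => e) (Fin.last n), by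
    simp only [Multiset.card_add, Multiset.card_map, Finsupp.card_toMultiset, Multiset.card_replicate]
    exact Nat.add_sub_cancel' s.2⟩

lemma padSym_injective (n d : ℕ) : Function.Injective (padSym n d) := by
  intro s t h
  have h' : (Finsupp.toMultiset s.1).map Fin.castSucc +
      Multiset.replicate (d - s.1.sum fun _ e => e) (Fin.last n) =
      (Finsupp.toMultiset t.1).map Fin.castSucc +
      Multiset.replicate (d - t.1.sum fun _ e => e) (Fin.last n) :=
    congrArg Subtype.val h
  have key : ∀ i : Fin n, s.1 i = t.1 i := by
    intro i
    have hne : (Fin.castSucc i : Fin (n + 1)) ≠ Fin.last n := (Fin.castSucc_lt_last i).ne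
    have := congrArg (Multiset.count (Fin.castSucc i)) h'
    simpa [Multiset.count_map_eq_count' _ _ (Fin.castSucc_injective n),
      Multiset.count_replicate, hne.symm] using this
  exact Subtype.ext (Finsupp.ext key)

lemma finrank_restrictTotalDegree_le (n d : ℕ) :
    Module.finrank ℝ (restrictTotalDegree (Fin n) ℝ d) ≤ (n + d).choose d := by
  haveI : Finite {s : Fin n →₀ ℕ // (s.sum fun _ e => e) ≤ d} :=
    Finite.of_injective _ (padSym_injective n d)
  haveI : Fintype {s : Fin n →₀ ℕ // (s.sum fun _ e => e) ≤ d} := Fintype.ofFinite _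
  have b : Module.Basis {s : Fin n →₀ ℕ // (s.sum fun _ e => e) ≤ d} ℝ
      (restrictTotalDegree (Fin n) ℝ d) :=
    MvPolynomial.basisRestrictSupport ℝ _
  rw [Module.finrank_eq_card_basis b]
  calc Fintype.card {s : Fin n →₀ ℕ // (s.sum fun _ e => e) ≤ d}
      ≤ Fintype.card (Sym (Fin (n + 1)) d) :=
        Fintype.card_le_of_injective _ (padSym_injective n d)
    _ = (n + d).choose d := by
        rw [Sym.card_sym_eq_choose]
        simp [Fintype.card_fin]

namespace IntBallCount

variable {n : ℕ}

/-- The linear polynomial `x ↦ ⟨y, x⟩`. -/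
def linP (y : EuclideanSpace ℝ (Fin n)) : MvPolynomial (Fin n) ℝ :=
  ∑ i, C (y i) * X i

lemma eval_linP (y : EuclideanSpace ℝ (Fin n)) (x : EuclideanSpace ℝ (Fin n)) :
    eval (x : Fin n → ℝ) (linP y) = (inner ℝ y x : ℝ) := by
  simp [linP, PiLp.inner_apply, RCLike.inner_apply, mul_comm]

lemma totalDegree_linP_le (y : EuclideanSpace ℝ (Fin n)) : (linP y).totalDegree ≤ 1 := by
  refine (totalDegree_finset_sum _ _).trans ?_
  refine Finset.sup_le fun i _ => ?_
  refine (totalDegree_mul _ _).trans ?_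
  simp [totalDegree_X]

end IntBallCount

noncomputable section
namespace IntBallCount
variable {n k : ℕ}

def wP (k : ℕ) (a : ℤ) (y : EuclideanSpace ℝ (Fin n)) : MvPolynomial (Fin n) ℝ :=
  ∏ j ∈ Finset.Icc (1 - (k : ℤ)) (a - 1), (linP y - C (j : ℝ))

lemma eval_wP (a : ℤ) (y x : EuclideanSpace ℝ (Fin n)) :
    eval (x : Fin n → ℝ) (wP k a y) =
      ∏ j ∈ Finset.Icc (1 - (k : ℤ)) (a - 1), ((inner ℝ y x : ℝ) - (j : ℝ)) := by
  simp [wP, eval_linP]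

lemma totalDegree_wP_le (a : ℤ) (ha : a ≤ (k : ℕ)) (y : EuclideanSpace ℝ (Fin n)) :
    (wP k a y).totalDegree ≤ 2 * k - 1 := by
  refine (totalDegree_finset_prod _ _).trans ?_
  have h1 : ∀ j ∈ Finset.Icc (1 - (k : ℤ)) (a - 1), (linP y - C ((j : ℤ) : ℝ)).totalDegree ≤ 1 := by
    intro j _
    exact (totalDegree_sub_C_le _ _).trans (totalDegree_linP_le y)
  refine (Finset.sum_le_sum h1).trans ?_
  rw [Finset.sum_const, smul_eq_mul, mul_one]
  rw [Int.card_Icc]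
  have : (a - 1 + 1 - (1 - (k : ℤ))) ≤ (2 * k - 1 : ℕ) := by
    omega
  exact Int.toNat_le.mpr this

lemma eval_wP_self_ne_zero (a : ℤ) (y : EuclideanSpace ℝ (Fin n))
    (hy : (inner ℝ y y : ℝ) = (a : ℝ)) :
    eval (y : Fin n → ℝ) (wP k a y) ≠ 0 := by
  rw [eval_wP]
  refine Finset.prod_ne_zero_iff.mpr fun j hj => ?_
  rw [Finset.mem_Icc] at hj
  rw [hy]
  have : (j : ℝ) < (a : ℝ) := by exact_mod_cast lt_of_le_of_lt hj.2 (by omega)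
  linarith

lemma eval_wP_eq_zero (a b : ℤ) (y z : EuclideanSpace ℝ (Fin n))
    (hb : (inner ℝ y z : ℝ) = (b : ℝ)) (h1 : 1 - (k : ℤ) ≤ b) (h2 : b ≤ a - 1) :
    eval (z : Fin n → ℝ) (wP k a y) = 0 := by
  rw [eval_wP]
  exact Finset.prod_eq_zero (Finset.mem_Icc.mpr ⟨h1, h2⟩) (by rw [hb, sub_self])

end IntBallCount

namespace IntBallCount

theorem core (n k : ℕ) (hk : 0 < k) (T : Set (EuclideanSpace ℝ (Fin n)))
    (hnorm : ∀ y ∈ T, (inner ℝ y y : ℝ) ≤ (k : ℝ))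
    (hint2 : ∀ y ∈ T, ∀ z ∈ T, ∃ m : ℤ, (inner ℝ y z : ℝ) = (m : ℝ))
    (hdiff : ∀ y ∈ T, ∀ z ∈ T, y ≠ z → (1 : ℝ) ≤ (inner ℝ (y - z) (y - z) : ℝ))
    (hsum : ∀ y ∈ T, ∀ z ∈ T, y ≠ z → (1 : ℝ) ≤ (inner ℝ (y + z) (y + z) : ℝ)) :
    T.Finite ∧ T.ncard ≤ (n + (2 * k - 1)).choose (2 * k - 1) := by
  classical
  have hA : ∀ y : T, ∃ m : ℤ, (inner ℝ y.1 y.1 : ℝ) = (m : ℝ) :=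
    fun y => hint2 y.1 y.2 y.1 y.2
  choose A hAspec using hA
  have hAk : ∀ y : T, A y ≤ (k : ℤ) := by
    intro y
    have := hnorm y.1 y.2
    rw [hAspec y] at this
    exact_mod_cast this
  set P : T → MvPolynomial (Fin n) ℝ := fun y => wP k (A y) y.1 with hP
  have hmem : ∀ y : T, P y ∈ restrictTotalDegree (Fin n) ℝ (2 * k - 1) :=
    fun y => (mem_restrictTotalDegree _ _ _).mpr (totalDegree_wP_le (A y) (hAk y) y.1)
  have hoff : ∀ y z : T, y ≠ z → A z ≤ A y → eval (z.1 : Fin n → ℝ) (P y) = 0 := by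
    intro y z hyz hle
    obtain ⟨b, hb⟩ := hint2 y.1 y.2 z.1 z.2
    have hyz' : y.1 ≠ z.1 := fun h => hyz (Subtype.ext h)
    have hd := hdiff y.1 y.2 z.1 z.2 hyz'
    have hs := hsum y.1 y.2 z.1 z.2 hyz'
    rw [real_inner_sub_sub_self, hAspec y, hAspec z, hb] at hd
    rw [real_inner_add_add_self, hAspec y, hAspec z, hb] at hs
    have hd' : 2 * b ≤ A y + A z - 1 := by
      have : (2 * b : ℝ) ≤ (A y : ℝ) + (A z : ℝ) - 1 := by linarith
      exact_mod_cast this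
    have hs' : -(2 * b) ≤ A y + A z - 1 := by
      have : (-(2 * b) : ℝ) ≤ (A y : ℝ) + (A z : ℝ) - 1 := by linarith
      exact_mod_cast this
    have hzk := hAk z
    have hyk := hAk y
    exact eval_wP_eq_zero (A y) b y.1 z.1 hb (by omega) (by omega)
  have hli : LinearIndependent ℝ P := by
    rw [linearIndependent_iff']
    suffices H : ∀ s : Finset T, ∀ g : T → ℝ,
        (∑ i ∈ s, g i • P i) = 0 → ∀ i ∈ s, g i = 0 from H
    intro s
    induction s using Finset.strongInduction with
    | _ s ih =>
      intro g h0 i hi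
      obtain ⟨i₀, hi₀s, hmin⟩ := Finset.exists_min_image s A ⟨i, hi⟩
      have hgi₀ : g i₀ = 0 := by
        have he := congrArg (eval (i₀.1 : Fin n → ℝ)) h0
        rw [map_sum, map_zero] at he
        rw [Finset.sum_eq_single i₀ (fun j hj hji => by
              rw [smul_eval, hoff j i₀ hji (hmin j hj), mul_zero])
            (fun h => absurd hi₀s h)] at he
        rw [smul_eval] at he
        exact (mul_eq_zero.mp he).resolve_right (eval_wP_self_ne_zero _ _ (hAspec i₀))
      have h0' : ∑ j ∈ s.erase i₀, g j • P j = 0 := by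
        rw [← Finset.add_sum_erase s (fun j => g j • P j) hi₀s, hgi₀, zero_smul, zero_add] at h0
        exact h0
      rcases eq_or_ne i i₀ with rfl | hne'
      · exact hgi₀
      · exact ih (s.erase i₀) (Finset.erase_ssubset hi₀s) g h0' i
          (Finset.mem_erase.mpr ⟨hne', hi⟩)
  have hliQ : LinearIndependent ℝ
      (fun y : T => (⟨P y, hmem y⟩ : restrictTotalDegree (Fin n) ℝ (2 * k - 1))) := by
    apply LinearIndependent.of_comp (restrictTotalDegree (Fin n) ℝ (2 * k - 1)).subtype
    exact hli
  have hfinT : T.Finite := Set.finite_coe_iff.mp hliQ.finite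
  refine ⟨hfinT, ?_⟩
  haveI : Fintype T := hfinT.fintype
  have h1 : T.ncard = Fintype.card T := by
    rw [← Nat.card_coe_set_eq, Nat.card_eq_fintype_card]
  have h2 := hliQ.fintype_card_le_finrank
  have h3 := finrank_restrictTotalDegree_le n (2 * k - 1)
  omega

end IntBallCount

/-- **Reverse Minkowski for integral lattices, ball version.**
For any integral lattice `L ⊂ ℝ^n` (a discrete additive subgroup all of whose pairwise
inner products are integers) and any positive integer `k`, the set of lattice vectors of
squared norm at most `k` is finite, of cardinality at most
`2 * (n + 2k - 1).choose (2k - 1) - 1`. -/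
theorem integral_lattice_ball_count (n k : ℕ) (hk : 0 < k)
    (L : AddSubgroup (EuclideanSpace ℝ (Fin n)))
    (hdisc : DiscreteTopology L)
    (hint : ∀ x ∈ L, ∀ y ∈ L, ∃ m : ℤ, (inner ℝ x y : ℝ) = (m : ℝ)) :
    {y : EuclideanSpace ℝ (Fin n) | y ∈ L ∧ ‖y‖ ^ 2 ≤ (k : ℝ)}.Finite ∧
      {y : EuclideanSpace ℝ (Fin n) | y ∈ L ∧ ‖y‖ ^ 2 ≤ (k : ℝ)}.ncard ≤
        2 * Nat.choose (n + 2 * k - 1) (2 * k - 1) - 1 := by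
  classical
  set S : Set (EuclideanSpace ℝ (Fin n)) :=
    {y : EuclideanSpace ℝ (Fin n) | y ∈ L ∧ ‖y‖ ^ 2 ≤ (k : ℝ)} with hSdef
  haveI : IsWellOrder (EuclideanSpace ℝ (Fin n)) WellOrderingRel := WellOrderingRel.isWellOrder
  set R : Set (EuclideanSpace ℝ (Fin n)) :=
    {y | y ∈ S ∧ (y = -y ∨ WellOrderingRel y (-y))} with hRdef
  -- every nonzero lattice vector has self inner product ≥ 1
  have hone : ∀ y ∈ L, y ≠ 0 → (1 : ℝ) ≤ (inner ℝ y y : ℝ) := by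
    intro y hy hy0
    obtain ⟨m, hm⟩ := hint y hy y hy
    have hpos : (0 : ℝ) < (inner ℝ y y : ℝ) := by
      rw [real_inner_self_eq_norm_sq]
      exact pow_pos (norm_pos_iff.mpr hy0) 2
    rw [hm] at hpos ⊢
    exact_mod_cast (by exact_mod_cast hpos : (0 : ℤ) < m)
  -- distinct elements of R are not negatives of each other
  have hnoneg : ∀ y ∈ R, ∀ z ∈ R, y ≠ z → z ≠ -y := by
    rintro y hy z hz hyz rfl
    rcases hy.2 with h1 | h1
    · exact hyz h1
    · rcases hz.2 with h2 | h2
      · rw [neg_neg] at h2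
        exact hyz h2.symm
      · rw [neg_neg] at h2
        exact asymm h1 h2
  have hcore := IntBallCount.core n k hk R
    (fun y hy => by rw [real_inner_self_eq_norm_sq]; exact hy.1.2)
    (fun y hy z hz => hint y hy.1.1 z hz.1.1)
    (fun y hy z hz hyz => by
      refine hone (y - z) (sub_mem hy.1.1 hz.1.1) (sub_ne_zero.mpr hyz))
    (fun y hy z hz hyz => by
      refine hone (y + z) (add_mem hy.1.1 hz.1.1) ?_
      intro h
      exact hnoneg y hy z hz hyz (by linear_combination (norm := module) h))
  obtain ⟨hRfin, hRcard⟩ := hcore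
  have h0S : (0 : EuclideanSpace ℝ (Fin n)) ∈ S := by
    constructor
    · exact zero_mem L
    · have : (0 : ℝ) ≤ (k : ℝ) := Nat.cast_nonneg k
      simpa using this
  have h0R : (0 : EuclideanSpace ℝ (Fin n)) ∈ R := ⟨h0S, Or.inl (by rw [neg_zero])⟩
  have hcover : S ⊆ R ∪ (Neg.neg '' (R \ {0})) := by
    intro y hy
    by_cases hyR : y = -y ∨ WellOrderingRel y (-y)
    · exact Or.inl ⟨hy, hyR⟩
    · push_neg at hyR
      have htri := trichotomous_of WellOrderingRel y (-y)
      have hr : WellOrderingRel (-y) y := by tauto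
      have hyn : -y ∈ R := by
        refine ⟨⟨neg_mem hy.1, by rw [norm_neg]; exact hy.2⟩, Or.inr (by rwa [neg_neg])⟩
      have hy0 : y ≠ 0 := by
        intro h
        exact hyR.1 (by rw [h, neg_zero])
      exact Or.inr ⟨-y, ⟨hyn, by simpa using hy0⟩, neg_neg y⟩
  have hfin : S.Finite :=
    Set.Finite.subset (hRfin.union (hRfin.diff.image _)) hcover
  refine ⟨hfin, ?_⟩
  have hRpos : 1 ≤ R.ncard := (Set.ncard_pos hRfin).mpr ⟨0, h0R⟩
  have hstep : S.ncard ≤ R.ncard + (R.ncard - 1) := by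
    calc S.ncard ≤ (R ∪ (Neg.neg '' (R \ {0}))).ncard :=
          Set.ncard_le_ncard hcover (hRfin.union (hRfin.diff.image _))
      _ ≤ R.ncard + (Neg.neg '' (R \ {0})).ncard := Set.ncard_union_le _ _
      _ ≤ R.ncard + (R \ {0}).ncard :=
          Nat.add_le_add_left (Set.ncard_image_le hRfin.diff) _
      _ = R.ncard + (R.ncard - 1) := by
          rw [Set.ncard_diff_singleton_of_mem h0R]
  have hidx : n + 2 * k - 1 = n + (2 * k - 1) := by omega
  rw [hidx]
  omega
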